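/- Let ε ∈ (0, 1/2] and let I be a bin packing instance in which every item has size at least ε/2. Let R be a rounding function on I with maximal group index m' satisfying: (A) m' = c/ε² for some real constant c > 0 with m' ≥ 1; (B) all groups R^j with j ≥ 1 have the same cardinality; (C) |R^0| = d·|R^1| for some real d ≥ 1; and (D) whenever R(i) < R(i') we have s(i) ≥ s(i'). Let δ ≥ 0, C ≥ 0, and let N ∈ ℕ satisfy N ≤ (1+δ)·OPT(I^R) + C. Then N + |R^0| ≤ (1 + ε' + δ)·OPT(I) + C, where ε' = (2d/c)·ε. -/

import Mathlib

open Finset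

/-- `Packs s N` : the items (with sizes `s`) can be packed into `N` bins of capacity 1. -/
def Packs {ι : Type} [Fintype ι] (s : ι → ℝ) (N : ℕ) : Prop :=
  ∃ B : ι → Fin N, ∀ j : Fin N, ∑ i ∈ Finset.univ.filter (fun i => B i = j), s i ≤ 1

/-- `IsBPOpt s N` : `N` is the least number of bins into which the items can be packed. -/
def IsBPOpt {ι : Type} [Fintype ι] (s : ι → ℝ) (N : ℕ) : Prop :=
  Packs s N ∧ ∀ N' : ℕ, Packs s N' → N ≤ N'

/-- The rounded size of item `i` under rounding `R` : the largest size in its group. -/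
noncomputable def roundedSize {ι : Type} [Fintype ι] (s : ι → ℝ) (R : ι → ℕ) (i : ι) : ℝ :=
  (Finset.univ.filter (fun i' => R i' = R i)).sup' ⟨i, by simp⟩ s

theorem rounded_solution_approximation
    (ε : ℝ) (hε0 : 0 < ε) (hε : ε ≤ 1 / 2)
    (ι : Type) [Fintype ι] (s : ι → ℝ)
    (hspos : ∀ i, 0 < s i) (hsle : ∀ i, s i ≤ 1) (hsbig : ∀ i, ε / 2 ≤ s i)
    (m' : ℕ) (hm' : 1 ≤ m')
    (R : ι → ℕ) (hR : ∀ i, R i ≤ m')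
    -- (A) m' = c/ε² for a constant c > 0
    (c : ℝ) (hc : 0 < c) (hA : (m' : ℝ) = c / ε ^ 2)
    -- (B) all groups R^j with j ≥ 1 have the same cardinality
    (hB : ∀ j k, 1 ≤ j → j ≤ m' → 1 ≤ k → k ≤ m' →
      (Finset.univ.filter (fun i => R i = j)).card =
        (Finset.univ.filter (fun i => R i = k)).card)
    -- (C) |R^0| = d·|R^1| for some d ≥ 1
    (d : ℝ) (hd : 1 ≤ d)
    (hC : ((Finset.univ.filter (fun i => R i = 0)).card : ℝ) =
      d * ((Finset.univ.filter (fun i => R i = 1)).card : ℝ))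
    -- (D) groups with smaller index contain larger items
    (hD : ∀ i i', R i < R i' → s i' ≤ s i)
    (OPT OPTR : ℕ)
    (hOPT : IsBPOpt s OPT)
    (hOPTR : IsBPOpt (fun i : {i : ι // 1 ≤ R i} => roundedSize s R i.1) OPTR)
    (δ C : ℝ) (hδ : 0 ≤ δ) (hCge : 0 ≤ C)
    (N : ℕ) (hN : (N : ℝ) ≤ (1 + δ) * OPTR + C)
    (ε' : ℝ) (hε' : ε' = 2 * d / c * ε) :
    (N : ℝ) + ((Finset.univ.filter (fun i => R i = 0)).card : ℝ)
      ≤ (1 + ε' + δ) * OPT + C := by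
  classical
  by_cases hne : Nonempty ι
  swap
  · -- empty case
    have hcard0 : (Finset.univ.filter (fun i => R i = 0)).card = 0 := by
      simp [Finset.filter_eq_empty_iff.mpr (fun i _ => absurd ⟨i⟩ hne)]
    have hOPT0 : Packs s 0 := by
      refine ⟨fun i => absurd ⟨i⟩ hne, fun j => j.elim0⟩
    have hOPTR0 : Packs (fun i : {i : ι // 1 ≤ R i} => roundedSize s R i.1) 0 := by
      refine ⟨fun i => absurd ⟨i.1⟩ hne, fun j => j.elim0⟩
    have h1 : OPTR = 0 := Nat.le_zero.mp (hOPTR.2 0 hOPTR0)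
    have hOg : (0:ℝ) ≤ (OPT:ℝ) := by positivity
    have hε'0 : 0 ≤ ε' := by
      rw [hε']; positivity
    rw [hcard0]
    push_cast
    rw [h1] at hN
    have hnn : 0 ≤ (1 + ε' + δ) * (OPT:ℝ) := by positivity
    push_cast at hN
    linarith
  -- Nonempty case
  obtain ⟨i₀⟩ := hne
  haveI : Nonempty ι := ⟨i₀⟩
  set G : ℕ → Finset ι := fun j => Finset.univ.filter (fun i => R i = j) with hG
  -- cardinality comparisons between consecutive groups
  have hcards : ∀ j : ℕ, (G (j+1)).card ≤ (G j).card := by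
    intro j
    rcases Nat.eq_zero_or_pos j with rfl | hj
    · -- G 1 vs G 0
      have h : ((G 0).card : ℝ) = d * (G 1).card := hC
      have : ((G (0+1)).card : ℝ) ≤ ((G 0).card : ℝ) := by
        rw [h]
        nlinarith [(Nat.cast_nonneg (G 1).card : (0:ℝ) ≤ (G 1).card)]
      exact_mod_cast this
    · by_cases hjm : j + 1 ≤ m'
      · exact le_of_eq (hB (j+1) j (by omega) hjm hj (by omega))
      · have : G (j+1) = ∅ := by
          apply Finset.filter_eq_empty_iff.mpr
          intro i _
          have := hR i
          omega
        simp [this]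
  -- injections from each group to the previous one
  have hex : ∀ j : ℕ, ∃ f : ι → ι, ∀ i ∈ G (j+1), f i ∈ G j ∧
      ∀ i' ∈ G (j+1), f i = f i' → i = i' := by
    intro j
    have hle : ((G (j+1) : Set ι)).encard ≤ ((G j : Set ι)).encard := by
      rw [Set.encard_coe_eq_coe_finsetCard, Set.encard_coe_eq_coe_finsetCard]
      exact_mod_cast hcards j
    obtain ⟨f, hf1, hf2⟩ := Set.Finite.exists_injOn_of_encard_le (Set.toFinite _) hle
    exact ⟨f, fun i hi => ⟨by simpa using hf1 (by simpa using hi),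
      fun i' hi' he => hf2 (by simpa using hi) (by simpa using hi') he⟩⟩
  choose g hg using hex
  -- the global injection F
  set F : ι → ι := fun i => g (R i - 1) i with hF
  have hFmem : ∀ i : ι, 1 ≤ R i → F i ∈ G (R i - 1) := by
    intro i hi
    have : i ∈ G (R i - 1 + 1) := by
      simp only [hG, Finset.mem_filter, Finset.mem_univ, true_and]
      omega
    exact (hg (R i - 1) i this).1
  have hFR : ∀ i : ι, 1 ≤ R i → R (F i) = R i - 1 := by
    intro i hi
    have := hFmem i hi
    simpa [hG] using this
  have hFinj : ∀ i i' : ι, 1 ≤ R i → 1 ≤ R i' → F i = F i' → i = i' := by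
    intro i i' hi hi' he
    have hRR : R i = R i' := by
      have h1 := hFR i hi
      have h2 := hFR i' hi'
      rw [he] at h1
      omega
    have hmi : i ∈ G (R i - 1 + 1) := by
      simp only [hG, Finset.mem_filter, Finset.mem_univ, true_and]; omega
    have hmi' : i' ∈ G (R i - 1 + 1) := by
      simp only [hG, Finset.mem_filter, Finset.mem_univ, true_and]; omega
    refine (hg (R i - 1) i hmi).2 i' hmi' ?_
    simpa [hF, hRR] using he
  have hFsize : ∀ i : ι, 1 ≤ R i → roundedSize s R i ≤ s (F i) := by
    intro i hi
    apply Finset.sup'_le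
    intro b hb
    have hbR : R b = R i := by simpa using hb
    have : R (F i) < R b := by
      have := hFR i hi
      omega
    exact hD (F i) b this
  -- OPTR ≤ OPT
  have hORO : OPTR ≤ OPT := by
    apply hOPTR.2
    obtain ⟨B, hB2⟩ := hOPT.1
    refine ⟨fun i => B (F i.1), fun j => ?_⟩
    have step1 : ∑ i ∈ Finset.univ.filter (fun i : {i : ι // 1 ≤ R i} => B (F i.1) = j),
        roundedSize s R i.1
        ≤ ∑ i ∈ Finset.univ.filter (fun i : {i : ι // 1 ≤ R i} => B (F i.1) = j),
        s (F i.1) := by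
      apply Finset.sum_le_sum
      intro i _
      exact hFsize i.1 i.2
    have step2 : ∑ i ∈ Finset.univ.filter (fun i : {i : ι // 1 ≤ R i} => B (F i.1) = j),
        s (F i.1)
        = ∑ i' ∈ (Finset.univ.filter (fun i : {i : ι // 1 ≤ R i} => B (F i.1) = j)).image
            (fun i => F i.1), s i' := by
      rw [Finset.sum_image]
      intro x _ y _ he
      exact Subtype.ext (hFinj x.1 y.1 x.2 y.2 he)
    have step3 : (Finset.univ.filter (fun i : {i : ι // 1 ≤ R i} => B (F i.1) = j)).image
        (fun i => F i.1) ⊆ Finset.univ.filter (fun i' => B i' = j) := by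
      intro x hx
      simp only [Finset.mem_image, Finset.mem_filter, Finset.mem_univ, true_and] at hx ⊢
      obtain ⟨a, ha, rfl⟩ := hx
      exact ha
    calc ∑ i ∈ Finset.univ.filter (fun i : {i : ι // 1 ≤ R i} => B (F i.1) = j),
          roundedSize s R i.1
        ≤ ∑ i' ∈ (Finset.univ.filter (fun i : {i : ι // 1 ≤ R i} => B (F i.1) = j)).image
            (fun i => F i.1), s i' := by rw [← step2]; exact step1
      _ ≤ ∑ i' ∈ Finset.univ.filter (fun i' => B i' = j), s i' :=
          Finset.sum_le_sum_of_subset_of_nonneg step3 (fun i _ _ => (hspos i).le)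
      _ ≤ 1 := hB2 j
  -- size bound : card ι * (ε/2) ≤ OPT
  have hsizebound : (Fintype.card ι : ℝ) * (ε / 2) ≤ (OPT : ℝ) := by
    obtain ⟨B, hB2⟩ := hOPT.1
    have h1 : ∑ i, s i ≤ (OPT : ℝ) := by
      have := Finset.sum_fiberwise (Finset.univ : Finset ι) B s
      calc ∑ i, s i = ∑ j : Fin OPT, ∑ i ∈ Finset.univ.filter (fun i => B i = j), s i := by
            rw [this]
        _ ≤ ∑ _j : Fin OPT, (1:ℝ) := Finset.sum_le_sum (fun j _ => hB2 j)
        _ = (OPT : ℝ) := by simp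
    have h2 : (Fintype.card ι : ℝ) * (ε / 2) ≤ ∑ i, s i := by
      calc (Fintype.card ι : ℝ) * (ε / 2) = ∑ _i : ι, (ε/2) := by
            simp [mul_comm]
        _ ≤ ∑ i, s i := Finset.sum_le_sum (fun i _ => hsbig i)
    linarith
  -- m' * n1 ≤ card ι
  have hgroups : m' * (G 1).card ≤ Fintype.card ι := by
    have hfib : (Finset.univ.filter (fun i => 1 ≤ R i)).card
        = ∑ j ∈ Finset.Icc 1 m', ((Finset.univ.filter (fun i => 1 ≤ R i)).filter
          (fun i => R i = j)).card := by
      apply Finset.card_eq_sum_card_fiberwise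
      intro i hi
      simp only [Finset.mem_coe, Finset.mem_filter, Finset.mem_univ, true_and] at hi
      simp only [Finset.mem_coe, Finset.mem_Icc]
      exact ⟨hi, hR i⟩
    have heq : ∀ j ∈ Finset.Icc 1 m',
        ((Finset.univ.filter (fun i => 1 ≤ R i)).filter (fun i => R i = j)).card
          = (G 1).card := by
      intro j hj
      simp only [Finset.mem_Icc] at hj
      rw [Finset.filter_filter]
      have : Finset.univ.filter (fun i => 1 ≤ R i ∧ R i = j)
          = Finset.univ.filter (fun i => R i = j) := by
        apply Finset.filter_congr
        intro i _
        constructor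
        · exact fun h => h.2
        · intro h; exact ⟨by omega, h⟩
      rw [this]
      exact hB j 1 hj.1 hj.2 le_rfl hm'
    calc m' * (G 1).card
        = ∑ _j ∈ Finset.Icc 1 m', (G 1).card := by
          simp [Nat.Icc_eq_range', mul_comm]
      _ = (Finset.univ.filter (fun i => 1 ≤ R i)).card := by
          rw [hfib]
          exact (Finset.sum_congr rfl heq).symm
      _ ≤ Fintype.card ι := Finset.card_le_card (Finset.filter_subset _ _) |>.trans
          (by simp)
  -- putting things together : |R^0| ≤ ε' * OPT
  have hn1 : ((G 1).card : ℝ) * (ε/2) * m' ≤ (OPT : ℝ) := by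
    have : ((m' * (G 1).card : ℕ) : ℝ) ≤ (Fintype.card ι : ℝ) := by
      exact_mod_cast hgroups
    push_cast at this
    have hε2 : (0:ℝ) < ε/2 := by linarith
    nlinarith
  have hR0 : ((Finset.univ.filter (fun i => R i = 0)).card : ℝ) ≤ ε' * OPT := by
    rw [hC, hε']
    have hm'pos : (0:ℝ) < (m':ℝ) := by exact_mod_cast hm'
    -- from hn1 : n1 * (ε/2) * m' ≤ OPT, and m' = c/ε²
    have h1 : ((G 1).card : ℝ) * (ε/2) * (c / ε^2) ≤ (OPT : ℝ) := by
      rw [← hA]; exact hn1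
    have hεne : ε ≠ 0 := ne_of_gt hε0
    have h2 : ((G 1).card : ℝ) * c / (2 * ε) ≤ (OPT : ℝ) := by
      have : ((G 1).card : ℝ) * (ε/2) * (c / ε^2) = ((G 1).card : ℝ) * c / (2 * ε) := by
        field_simp
      linarith [h1, this.symm.le.trans h1]
    -- want : d * n1 ≤ (2*d/c*ε) * OPT
    have hdpos : (0:ℝ) < d := by linarith
    rw [div_le_iff₀ (by positivity)] at h2
    calc d * ((G 1).card : ℝ)
        ≤ d * ((OPT : ℝ) * (2 * ε) / c) := by
          apply mul_le_mul_of_nonneg_left _ hdpos.le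
          rw [le_div_iff₀ hc]
          linarith
      _ = 2 * d / c * ε * OPT := by field_simp
  -- final arithmetic
  have hOle : (OPTR : ℝ) ≤ (OPT : ℝ) := by exact_mod_cast hORO
  have hOg : (0:ℝ) ≤ (OPT:ℝ) := by positivity
  nlinarith [hN, hR0, hOle, hδ]
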